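/- For all reals a, b > 0, the set {s : ℝ | s > 0 and g_{a,b}(s) = 0} has at most two elements. -/

import Mathlib

/-- The effective ionization rate `g_{a,b}(s) = a * s * exp (-b/s) - s^2/4`. -/
noncomputable def gab (a b s : ℝ) : ℝ := a * s * Real.exp (-b / s) - s ^ 2 / 4

lemma hderiv (b s : ℝ) (hs : s ≠ 0) :
    HasDerivAt (fun s : ℝ => s * Real.exp (b / s))
      (Real.exp (b / s) * (1 - b / s)) s := by
  have h1 : HasDerivAt (fun s : ℝ => b / s) (b * (-(s ^ 2)⁻¹)) s := by
    simpa [div_eq_mul_inv] using (hasDerivAt_inv hs).const_mul b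
  have h3 : HasDerivAt (fun s : ℝ => s * Real.exp (b / s)) _ s := (hasDerivAt_id s).mul h1.exp
  convert h3 using 1
  simp only [id]
  field_simp
  ring

lemma zero_iff (a b s : ℝ) (ha : 0 < a) (hs : 0 < s) :
    gab a b s = 0 ↔ s * Real.exp (b / s) = 4 * a := by
  have hE := Real.exp_pos (b / s)
  have hne : Real.exp (-b / s) = (Real.exp (b / s))⁻¹ := by
    rw [neg_div]; exact Real.exp_neg _
  have hmul : Real.exp (b / s) * (Real.exp (b / s))⁻¹ = 1 :=
    mul_inv_cancel₀ (ne_of_gt hE)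
  unfold gab
  rw [hne, sub_eq_zero]
  constructor
  · intro h
    field_simp at h
    apply mul_left_cancel₀ (ne_of_gt hs)
    nlinarith [h]
  · intro h
    field_simp
    nlinarith [h]

theorem gab_at_most_two_positive_zeros (a b : ℝ) (ha : 0 < a) (hb : 0 < b) :
    {s : ℝ | 0 < s ∧ gab a b s = 0}.encard ≤ 2 := by
  set h : ℝ → ℝ := fun s => s * Real.exp (b / s) with hh
  have hcont : ContinuousOn h {s : ℝ | s ≠ 0} := by
    apply ContinuousOn.mul continuousOn_id
    exact (Real.continuous_exp.comp_continuousOn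
      (continuousOn_const.div continuousOn_id (fun x hx => hx)))
  -- strict anti on Ioc 0 b
  have hanti : StrictAntiOn h (Set.Ioc 0 b) := by
    apply strictAntiOn_of_deriv_neg (convex_Ioc 0 b)
    · exact hcont.mono (fun x hx => ne_of_gt hx.1)
    · intro x hx
      rw [interior_Ioc] at hx
      rw [(hderiv b x (ne_of_gt hx.1)).deriv]
      have h1 : 1 < b / x := (one_lt_div hx.1).2 hx.2
      nlinarith [Real.exp_pos (b / x)]
  have hmono : StrictMonoOn h (Set.Ici b) := by
    apply strictMonoOn_of_deriv_pos (convex_Ici b)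
    · exact hcont.mono (fun x hx => ne_of_gt (lt_of_lt_of_le hb hx))
    · intro x hx
      rw [interior_Ici] at hx
      have hx0 : 0 < x := hb.trans hx
      rw [(hderiv b x (ne_of_gt hx0)).deriv]
      have h1 : b / x < 1 := (div_lt_one hx0).2 hx
      nlinarith [Real.exp_pos (b / x)]
  have hsub : {s : ℝ | 0 < s ∧ gab a b s = 0} ⊆
      {s ∈ Set.Ioc 0 b | h s = 4 * a} ∪ {s ∈ Set.Ici b | h s = 4 * a} := by
    rintro s ⟨hs, hz⟩
    have := (zero_iff a b s ha hs).1 hz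
    rcases le_or_gt s b with hsb | hsb
    · exact Or.inl ⟨⟨hs, hsb⟩, this⟩
    · exact Or.inr ⟨le_of_lt hsb, this⟩
  calc ({s : ℝ | 0 < s ∧ gab a b s = 0}).encard
      ≤ ({s ∈ Set.Ioc 0 b | h s = 4 * a} ∪ {s ∈ Set.Ici b | h s = 4 * a}).encard :=
        Set.encard_le_encard hsub
    _ ≤ {s ∈ Set.Ioc 0 b | h s = 4 * a}.encard + {s ∈ Set.Ici b | h s = 4 * a}.encard :=
        Set.encard_union_le _ _
    _ ≤ 1 + 1 := by
        gcongr
        · rw [Set.encard_le_one_iff]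
          intro x y ⟨hx, hx'⟩ ⟨hy, hy'⟩
          exact hanti.injOn hx hy (hx'.trans hy'.symm)
        · rw [Set.encard_le_one_iff]
          intro x y ⟨hx, hx'⟩ ⟨hy, hy'⟩
          exact hmono.injOn hx hy (hx'.trans hy'.symm)
    _ = 2 := by norm_num
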